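/- For a regular Markoff triple (e, g, f), define the coweights by r_e² = −1 + s_e·e, r_f² = −1 + s_f·f, r_g² = −1 + s_g·g. Then under right mutation E = 3fg − e the new coweight satisfies s_E = 3f·s_g − s_e. -/

import Mathlib

/-- Descent lemma: any common divisor of the entries of a Markoff triple is a unit. -/
lemma markoff_common_dvd : ∀ (n : ℕ) (a b c d : ℤ), 0 < a → 0 < b → 0 < c →
    a ^ 2 + b ^ 2 + c ^ 2 = 3 * a * b * c → a + b + c ≤ (n : ℤ) →
    d ∣ a → d ∣ b → d ∣ c → d ∣ 1 := by
  intro n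
  induction n using Nat.strong_induction_on with
  | _ n ih =>
    have core : ∀ a b c d : ℤ, 0 < a → 0 < b → 0 < c → a ≤ b → b ≤ c →
        a ^ 2 + b ^ 2 + c ^ 2 = 3 * a * b * c → a + b + c ≤ (n : ℤ) →
        d ∣ a → d ∣ b → d ∣ c → d ∣ 1 := by
      intro a b c d ha hb hc hab hbc heq hsum da db dc
      by_cases hc1 : c = 1
      · have ha1 : a = 1 := by omega
        rwa [ha1] at da
      · have hc2 : 2 ≤ c := by omega
        -- b < c
        have hbc' : b < c := by
          rcases lt_or_eq_of_le hbc with h' | h'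
          · exact h'
          · exfalso
            rw [← h'] at heq hc2
            have key : a ^ 2 = b ^ 2 * (3 * a - 2) := by linear_combination heq
            rcases lt_or_ge a 2 with h1 | h1
            · have ha1 : a = 1 := by omega
              rw [ha1] at key
              nlinarith
            · nlinarith [key, mul_le_mul hab hab ha.le hb.le,
                mul_le_mul_of_nonneg_left (show (4:ℤ) ≤ 3*a-2 by omega) (sq_nonneg b)]
        -- a^2 + b^2 < c^2
        have hlt : a ^ 2 + b ^ 2 < c ^ 2 := by
          by_contra hge
          push_neg at hge
          have h1 : 3 * a * c ≤ 4 * b := by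
            nlinarith [mul_le_mul hab hab ha.le hb.le]
          have ha1 : a = 1 := by
            have : 3 * a < 4 := by nlinarith
            omega
          nlinarith [mul_le_mul (show b+1 ≤ c by omega) (show b+1 ≤ c by omega)
            (by positivity : (0:ℤ) ≤ b+1) hc.le]
        set c' : ℤ := 3 * a * b - c with hc'
        have hcc' : c * c' = a ^ 2 + b ^ 2 := by rw [hc']; linear_combination -heq
        have hc'pos : 0 < c' := by
          by_contra h0
          push_neg at h0
          have h6 := mul_nonpos_of_nonneg_of_nonpos hc.le h0
          nlinarith [mul_pos ha ha]
        have hc'lt : c' < c := by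
          have h7 : c * c' < c * c := by nlinarith [hcc', hlt]
          exact lt_of_mul_lt_mul_left h7 hc.le
        have heq' : a ^ 2 + b ^ 2 + c' ^ 2 = 3 * a * b * c' := by
          rw [hc']; linear_combination heq
        have dc' : d ∣ c' := by
          rw [hc']
          exact dvd_sub ((da.mul_left 3).mul_right b) dc
        have hn3 : 3 ≤ n := by
          have : (3 : ℤ) ≤ (n : ℤ) := by linarith
          exact_mod_cast this
        have hsum' : a + b + c' ≤ ((n - 1 : ℕ) : ℤ) := by
          push_cast [Nat.cast_sub (by omega : 1 ≤ n)]
          linarith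
        exact ih (n - 1) (by omega) a b c' d ha hb hc'pos heq' hsum' da db dc'
    intro a b c d ha hb hc heq hsum da db dc
    rcases le_total a b with h1 | h1 <;> rcases le_total b c with h2 | h2 <;>
      rcases le_total a c with h3 | h3
    · exact core a b c d ha hb hc h1 h2 heq (by linarith) da db dc
    · exact core a b c d ha hb hc h1 h2 heq (by linarith) da db dc
    · exact core a c b d ha hc hb h3 h2 (by linear_combination heq) (by linarith) da dc db
    · exact core c a b d hc ha hb h3 h1 (by linear_combination heq) (by linarith) dc da db
    · exact core b a c d hb ha hc h1 h3 (by linear_combination heq) (by linarith) db da dc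
    · exact core b c a d hb hc ha h2 h3 (by linear_combination heq) (by linarith) db dc da
    · exact core c b a d hc hb ha h2 h1 (by linear_combination heq) (by linarith) dc db da
    · exact core c b a d hc hb ha h2 h1 (by linear_combination heq) (by linarith) dc db da

/-- Mutation rule for the coweights of a regular Markoff triple: for the right
mutation `E = 3fg - e`, the coweights (defined by `r² = -1 + s·n`) satisfy
`s_E = 3f*s_g - s_e`. -/
theorem markoff_coweight_mutation (e g f r_e r_g r_f s_e s_g s_f E r_E s_E : ℤ)
    (he : 0 < e) (hf : 0 < f) (heg : e < g) (hfg : f < g) (hef : e ≠ f)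
    (h : e ^ 2 + f ^ 2 + g ^ 2 = 3 * e * f * g)
    (hre0 : 0 ≤ r_e) (hre1 : r_e < e) (hre : e ∣ f * r_e - g)
    (hrf0 : 0 ≤ r_f) (hrf1 : r_f < f) (hrf : f ∣ g * r_f - e)
    (hrg0 : 0 ≤ r_g) (hrg1 : r_g < g) (hrg : g ∣ e * r_g - f)
    (hse : r_e ^ 2 = -1 + s_e * e)
    (hsf : r_f ^ 2 = -1 + s_f * f)
    (hsg : r_g ^ 2 = -1 + s_g * g)
    (hE : E = 3 * f * g - e)
    (hrE0 : 0 ≤ r_E) (hrE1 : r_E < E) (hrE : E ∣ g * r_E - f)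
    (hsE : r_E ^ 2 = -1 + s_E * E) :
    s_E = 3 * f * s_g - s_e := by
  subst hE
  have hg0 : 0 < g := lt_trans he heg
  have hEpos : 0 < 3 * f * g - e := by nlinarith
  -- coprimality of e and g
  have cop : IsCoprime e g := by
    rw [Int.isCoprime_iff_gcd_eq_one]
    set d : ℤ := (Int.gcd e g : ℤ) with hd
    have de : d ∣ e := Int.gcd_dvd_left e g
    have dg : d ∣ g := Int.gcd_dvd_right e g
    have df : d ∣ f := by
      have h2 : d ^ 2 ∣ f ^ 2 := by
        have hf2 : f ^ 2 = 3 * e * f * g - e ^ 2 - g ^ 2 := by linarith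
        rw [hf2]
        have h3 : d ^ 2 ∣ 3 * e * f * g := by
          have : d * d ∣ e * g := mul_dvd_mul de dg
          have h4 : e * g ∣ 3 * e * f * g := ⟨3 * f, by ring⟩
          calc d ^ 2 = d * d := sq d
          _ ∣ e * g := this
          _ ∣ 3 * e * f * g := h4
        exact dvd_sub (dvd_sub h3 (pow_dvd_pow_of_dvd de 2)) (pow_dvd_pow_of_dvd dg 2)
      have : d ∣ f := (Int.pow_dvd_pow_iff (two_ne_zero)).mp h2
      exact this
    have d1 : d ∣ 1 := markoff_common_dvd (e + f + g).toNat e f g d he hf hg0 h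
      (by rw [Int.toNat_of_nonneg (by linarith)]) de df dg
    have : (0 : ℤ) ≤ d := by rw [hd]; positivity
    have := Int.isUnit_iff.mp (isUnit_of_dvd_one d1)
    omega
  -- the weight identity e * r_g - g * r_e = f
  obtain ⟨k, hk⟩ := hrg
  obtain ⟨u, hu⟩ := hre
  have h1 : e ∣ (r_e * k + 1) * g := by
    have : (r_e * k + 1) * g = e * (r_e * r_g - u) := by linear_combination (-r_e) * hk - hu
    rw [this]
    exact dvd_mul_right e _
  have h1' : e ∣ r_e * k + 1 := (cop.dvd_of_dvd_mul_right) h1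
  have cop_ere : IsCoprime e r_e := ⟨s_e, -r_e, by linear_combination -hse⟩
  have h2 : e ∣ (k - r_e) * r_e := by
    have heq2 : (k - r_e) * r_e = (r_e * k + 1) - (r_e ^ 2 + 1) := by ring
    have h3 : e ∣ r_e ^ 2 + 1 := ⟨s_e, by linarith⟩
    rw [heq2]
    exact dvd_sub h1' h3
  have h4 : e ∣ k - r_e := cop_ere.dvd_of_dvd_mul_right h2
  -- bounds on k
  have hk0 : 0 ≤ k := by
    by_contra h0
    push_neg at h0
    have : g * k ≤ g * (-1) := mul_le_mul_of_nonneg_left (by omega) hg0.le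
    nlinarith [mul_nonneg he.le hrg0]
  have hke : k < e := by
    by_contra h0
    push_neg at h0
    have : g * e ≤ g * k := mul_le_mul_of_nonneg_left h0 hg0.le
    nlinarith [mul_le_mul_of_nonneg_left (show r_g ≤ g - 1 by omega) he.le]
  have hkre : k = r_e := by
    obtain ⟨t, ht⟩ := h4
    have : t = 0 := by
      by_contra h0
      rcases lt_or_gt_of_ne h0 with hneg | hpos
      · have : e * t ≤ e * (-1) := mul_le_mul_of_nonneg_left (by omega) he.le
        linarith
      · have : e * 1 ≤ e * t := mul_le_mul_of_nonneg_left (by omega) he.le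
        linarith
    rw [this, mul_zero] at ht
    linarith
  have hX : e * r_g - g * r_e = f := by rw [hkre] at hk; linarith
  -- the candidate value of r_E
  have hgc : g * (3 * f * r_g - r_e) = f + (3 * f * g - e) * r_g := by
    linear_combination hX
  have hc0l : 0 ≤ 3 * f * r_g - r_e := by
    by_contra h0
    push_neg at h0
    have : g * (3 * f * r_g - r_e) ≤ g * (-1) := mul_le_mul_of_nonneg_left (by omega) hg0.le
    nlinarith [mul_nonneg hEpos.le hrg0]
  have hfE : f < 3 * f * g - e := by nlinarith
  have hc0u : 3 * f * r_g - r_e < 3 * f * g - e := by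
    have hb : (3 * f * g - e) * r_g ≤ (3 * f * g - e) * (g - 1) :=
      mul_le_mul_of_nonneg_left (by omega) hEpos.le
    have h9 : g * (3 * f * r_g - r_e) < g * (3 * f * g - e) := by linarith [hgc, hb, hfE]
    exact lt_of_mul_lt_mul_left h9 hg0.le
  -- coprimality of E and g
  have cop_Eg : IsCoprime (3 * f * g - e) g := by
    have heq3 : 3 * f * g - e = -e + (3 * f) * g := by ring
    rw [heq3]
    exact cop.neg_left.add_mul_right_left _
  -- r_E equals the candidate
  have hdvd : (3 * f * g - e) ∣ (r_E - (3 * f * r_g - r_e)) * g := by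
    have heq4 : (r_E - (3 * f * r_g - r_e)) * g =
        (g * r_E - f) - (g * (3 * f * r_g - r_e) - f) := by ring
    rw [heq4]
    exact dvd_sub hrE ⟨r_g, by linarith⟩
  have h5 : (3 * f * g - e) ∣ r_E - (3 * f * r_g - r_e) := cop_Eg.dvd_of_dvd_mul_right hdvd
  have hrEc : r_E = 3 * f * r_g - r_e := by
    obtain ⟨t, ht⟩ := h5
    have : t = 0 := by
      by_contra h0
      rcases lt_or_gt_of_ne h0 with hneg | hpos
      · have : (3 * f * g - e) * t ≤ (3 * f * g - e) * (-1) :=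
          mul_le_mul_of_nonneg_left (by omega) hEpos.le
        linarith
      · have : (3 * f * g - e) * 1 ≤ (3 * f * g - e) * t :=
          mul_le_mul_of_nonneg_left (by omega) hEpos.le
        linarith
    rw [this, mul_zero] at ht
    linarith
  rw [hrEc] at hsE
  -- final computation
  have hne : (3 * f * g - e) * (e * g) ≠ 0 := by positivity
  apply mul_right_cancel₀ hne
  linear_combination (-(e * g)) * hsE + (9 * f ^ 2 * e * g - 3 * f * e ^ 2) * hsg +
    (e * g - 3 * f * g ^ 2) * hse + (3 * f) * h +
    (3 * f * (e * r_g - g * r_e - f) + 6 * f ^ 2) * hX
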